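/- Suppose there exists a probability measure μ on (X, 𝒜) with μ absolutely continuous with respect to λ and μ invariant under T (μ ∘ T⁻¹ = μ). Then T is exact (every tail set A satisfies λ(A) = 0 or λ(X \ A) = 0) if and only if for every measurable A ⊆ X with λ(A) > 0 one has μ(T̂ⁿA) → 1 as n → ∞. -/

import Mathlib

open MeasureTheory Set Filter

/-- If `T` admits an invariant probability measure `μ ≪ λ`, then `T` is
exact iff `μ(T̂ⁿA) → 1` for every measurable `A` with `λ(A) > 0`. -/
theorem stmt_19 {X : Type*} [MeasurableSpace X]
    (lam : Measure X) [SigmaFinite lam]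
    (T : X → X) (hT : Measurable T) (hnp : lam.map T ≪ lam)
    (hatT : Set X → Set X)
    (hm : ∀ A : Set X, MeasurableSet A → MeasurableSet (hatT A))
    (hchar : ∀ A : Set X, MeasurableSet A → ∀ C : Set X, MeasurableSet C →
      (0 < lam (hatT A ∩ C) ↔ 0 < lam (A ∩ T ⁻¹' C)))
    (μ : Measure X) [IsProbabilityMeasure μ] (hac : μ ≪ lam)
    (hinv : μ.map T = μ) :
    (∀ A : Set X, MeasurableSet A →
        (∀ n : ℕ, ∃ An : Set X, MeasurableSet An ∧
          lam (symmDiff A (T^[n] ⁻¹' An)) = 0) →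
        lam A = 0 ∨ lam Aᶜ = 0) ↔
    (∀ A : Set X, MeasurableSet A → 0 < lam A →
      Tendsto (fun n : ℕ => μ (hatT^[n] A)) atTop (nhds 1)) := by
  -- measurability of iterates
  have hTn : ∀ n : ℕ, Measurable (T^[n]) := fun n => hT.iterate n
  have hmIter : ∀ n : ℕ, ∀ A : Set X, MeasurableSet A → MeasurableSet (hatT^[n] A) := by
    intro n
    induction n with
    | zero => intro A hA; simpa using hA
    | succ n ih =>
      intro A hA
      rw [Function.iterate_succ_apply]
      exact ih _ (hm _ hA)
  -- null preservation under iterated preimages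
  have hnull : ∀ n : ℕ, ∀ N : Set X, MeasurableSet N → lam N = 0 →
      lam (T^[n] ⁻¹' N) = 0 := by
    intro n
    induction n with
    | zero => intro N _ h; simpa using h
    | succ n ih =>
      intro N hN h
      have h1 : lam (T ⁻¹' N) = 0 := by
        have h2 := hnp (show lam N = 0 from h)
        rwa [Measure.map_apply hT hN] at h2
      rw [Function.iterate_succ', Set.preimage_comp]
      exact ih _ (hT hN) h1
  -- iterated characterization of essential images
  have hcharIter : ∀ n : ℕ, ∀ A : Set X, MeasurableSet A → ∀ C : Set X, MeasurableSet C →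
      (0 < lam (hatT^[n] A ∩ C) ↔ 0 < lam (A ∩ T^[n] ⁻¹' C)) := by
    intro n
    induction n with
    | zero => intro A hA C hC; simp
    | succ n ih =>
      intro A hA C hC
      rw [Function.iterate_succ_apply]
      refine (ih _ (hm _ hA) C hC).trans ?_
      refine (hchar A hA (T^[n] ⁻¹' C) ((hTn n) hC)).trans ?_
      rw [Function.iterate_succ, Set.preimage_comp]
  have hcharIter0 : ∀ n : ℕ, ∀ A : Set X, MeasurableSet A → ∀ C : Set X, MeasurableSet C →
      (lam (hatT^[n] A ∩ C) = 0 ↔ lam (A ∩ T^[n] ⁻¹' C) = 0) := by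
    intro n A hA C hC
    have h := (hcharIter n A hA C hC).not
    simpa [pos_iff_ne_zero, not_not] using h
  -- invariance of μ under iterated preimages
  have hμinv : ∀ n : ℕ, ∀ S : Set X, MeasurableSet S → μ (T^[n] ⁻¹' S) = μ S := by
    intro n
    induction n with
    | zero => intro S _; simp
    | succ n ih =>
      intro S hS
      have h1 : μ (T ⁻¹' S) = μ S := by
        conv_rhs => rw [← hinv]
        rw [Measure.map_apply hT hS]
      rw [Function.iterate_succ', Set.preimage_comp, ih _ (hT hS), h1]
  constructor
  · -- exactness → convergence
    intro hexact A hA hApos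
    set B : ℕ → Set X := fun n => T^[n] ⁻¹' (hatT^[n] A) with hBdef
    have hBm : ∀ n, MeasurableSet (B n) := fun n => (hTn n) (hmIter n A hA)
    have hB0 : B 0 = A := by simp [hBdef]
    -- one-step a.e. monotonicity
    have hstep : ∀ n, lam (B n \ B (n + 1)) = 0 := by
      intro n
      set S := hatT^[n] A with hSdef
      have hSm : MeasurableSet S := hmIter n A hA
      have hkey : lam (S \ T ⁻¹' (hatT S)) = 0 := by
        have h0 : ¬ 0 < lam (hatT S ∩ (hatT S)ᶜ) := by simp
        have h1 := (hchar S hSm (hatT S)ᶜ (hm _ hSm).compl).not.mp h0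
        rw [pos_iff_ne_zero, not_not] at h1
        simpa [Set.preimage_compl, Set.diff_eq] using h1
      have heq : B n \ B (n + 1) = T^[n] ⁻¹' (S \ T ⁻¹' (hatT S)) := by
        have h1 : B (n + 1) = T^[n] ⁻¹' (T ⁻¹' (hatT S)) := by
          simp only [hBdef]
          rw [Function.iterate_succ_apply' hatT, Function.iterate_succ' T, Set.preimage_comp]
        rw [h1, Set.preimage_diff]
      rw [heq]
      exact hnull n _ (hSm.diff (hT (hm _ hSm))) hkey
    have hchain : ∀ k j : ℕ, lam (B k \ B (k + j)) = 0 := by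
      intro k j
      induction j with
      | zero => simp
      | succ j ih =>
        refine measure_mono_null ?_ (measure_union_null ih (hstep (k + j)))
        rintro x ⟨hx, hx2⟩
        by_cases hxj : x ∈ B (k + j)
        · exact Or.inr ⟨hxj, by simpa [Nat.add_assoc] using hx2⟩
        · exact Or.inl ⟨hx, hxj⟩
    have hle : ∀ k n : ℕ, k ≤ n → lam (B k \ B n) = 0 := by
      intro k n h
      obtain ⟨j, rfl⟩ := Nat.exists_eq_add_of_le h
      exact hchain k j
    set Bu : Set X := ⋃ n, B n with hBudef
    have hBum : MeasurableSet Bu := MeasurableSet.iUnion hBm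
    have hBupos : 0 < lam Bu := lt_of_lt_of_le hApos (by rw [← hB0]; exact measure_mono (Set.subset_iUnion B 0))
    -- Bu is a tail set
    have htail : ∀ n : ℕ, ∃ An : Set X, MeasurableSet An ∧
        lam (symmDiff Bu (T^[n] ⁻¹' An)) = 0 := by
      intro n
      refine ⟨⋃ m, T^[m] ⁻¹' (hatT^[n + m] A), MeasurableSet.iUnion fun m => (hTn m) (hmIter _ A hA), ?_⟩
      have hCeq : T^[n] ⁻¹' (⋃ m, T^[m] ⁻¹' (hatT^[n + m] A)) = ⋃ m, B (n + m) := by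
        rw [Set.preimage_iUnion]
        refine Set.iUnion_congr fun m => ?_
        rw [← Set.preimage_comp, ← Function.iterate_add, Nat.add_comm m n]
      rw [hCeq]
      have hsub : (⋃ m, B (n + m)) ⊆ Bu := Set.iUnion_subset fun m => Set.subset_iUnion B (n + m)
      rw [Set.symmDiff_def]
      refine measure_union_null ?_ (by rw [Set.diff_eq_empty.mpr hsub]; simp)
      have : Bu \ (⋃ m, B (n + m)) ⊆ ⋃ k, (B k \ B (n + k)) := by
        rw [hBudef, Set.iUnion_diff]
        refine Set.iUnion_mono fun k => ?_
        exact Set.diff_subset_diff_right (Set.subset_iUnion (fun m => B (n + m)) k)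
      refine measure_mono_null this (measure_iUnion_null fun k => hle k (n + k) (Nat.le_add_left k n))
    rcases hexact Bu hBum htail with h0 | hc
    · exact absurd h0 (ne_of_gt hBupos)
    · have hμBu : μ Bu = 1 := by
        have h1 : μ Buᶜ = 0 := hac hc
        have h2 := measure_add_measure_compl (μ := μ) hBum
        rwa [h1, add_zero, measure_univ] at h2
      -- accumulate
      have hacc : ∀ n, lam (Set.accumulate B n \ B n) = 0 := by
        intro n
        induction n with
        | zero =>
          have hsub : Set.accumulate B 0 ⊆ B 0 := by
            intro x hx
            obtain ⟨y, hy, hxy⟩ := Set.mem_accumulate.mp hx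
            rw [Nat.le_zero] at hy
            rwa [hy] at hxy
          rw [Set.diff_eq_empty.mpr hsub]
          simp
        | succ n ih =>
          refine measure_mono_null ?_ (measure_union_null ih (hstep n))
          rintro x ⟨hx, hx2⟩
          obtain ⟨y, hy, hxy⟩ := Set.mem_accumulate.mp hx
          rcases eq_or_lt_of_le hy with rfl | hlt
          · exact absurd hxy hx2
          · have hyn : y ≤ n := Nat.lt_succ_iff.mp hlt
            by_cases hxn : x ∈ B n
            · exact Or.inr ⟨hxn, hx2⟩
            · exact Or.inl ⟨Set.mem_accumulate.mpr ⟨y, hyn, hxy⟩, hxn⟩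
      have hμacc : ∀ n, μ (Set.accumulate B n) = μ (B n) := by
        intro n
        refine le_antisymm ?_ (measure_mono Set.subset_accumulate)
        calc μ (Set.accumulate B n) ≤ μ ((Set.accumulate B n \ B n) ∪ B n) :=
              measure_mono (Set.subset_diff_union _ _)
          _ ≤ μ (Set.accumulate B n \ B n) + μ (B n) := measure_union_le _ _
          _ = μ (B n) := by rw [hac (hacc n), zero_add]
      have htend : Tendsto (fun n => μ (Set.accumulate B n)) atTop (nhds 1) := by
        have := tendsto_measure_iUnion_accumulate (μ := μ) (f := B)
        rwa [← hBudef, hμBu] at this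
      refine htend.congr fun n => ?_
      rw [hμacc n, hBdef]
      exact hμinv n _ (hmIter n A hA)
  · -- convergence → exactness
    intro hconv A hA htail
    by_contra hcon
    push_neg at hcon
    obtain ⟨h1, h2⟩ := hcon
    have hApos : 0 < lam A := pos_iff_ne_zero.mpr h1
    have hAcpos : 0 < lam Aᶜ := pos_iff_ne_zero.mpr h2
    have htailc : ∀ n : ℕ, ∃ An : Set X, MeasurableSet An ∧
        lam (symmDiff Aᶜ (T^[n] ⁻¹' An)) = 0 := by
      intro n
      obtain ⟨An, hAnm, hAn⟩ := htail n
      refine ⟨Anᶜ, hAnm.compl, ?_⟩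
      rw [Set.preimage_compl]
      rwa [compl_symmDiff_compl]
    have hc1 := hconv A hA hApos
    have hc2 := hconv Aᶜ hA.compl hAcpos
    have hsum : ∀ n : ℕ, μ (hatT^[n] A) + μ (hatT^[n] Aᶜ) ≤ 1 := by
      intro n
      obtain ⟨An, hAnm, hAn⟩ := htail n
      have hd1 : lam (hatT^[n] A ∩ Anᶜ) = 0 := by
        rw [hcharIter0 n A hA Anᶜ hAnm.compl]
        refine measure_mono_null ?_ hAn
        rw [Set.preimage_compl, ← Set.diff_eq]
        exact fun x hx => Or.inl hx
      have hd2 : lam (hatT^[n] Aᶜ ∩ An) = 0 := by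
        rw [hcharIter0 n Aᶜ hA.compl An hAnm]
        refine measure_mono_null ?_ hAn
        rintro x ⟨hx1, hx2⟩
        exact Or.inr ⟨hx2, hx1⟩
      have hb1 : μ (hatT^[n] A) ≤ μ An := by
        calc μ (hatT^[n] A) ≤ μ ((hatT^[n] A ∩ Anᶜ) ∪ An) := by
              refine measure_mono fun x hx => ?_
              by_cases hxA : x ∈ An
              · exact Or.inr hxA
              · exact Or.inl ⟨hx, hxA⟩
          _ ≤ μ (hatT^[n] A ∩ Anᶜ) + μ An := measure_union_le _ _
          _ = μ An := by rw [hac hd1, zero_add]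
      have hb2 : μ (hatT^[n] Aᶜ) ≤ μ Anᶜ := by
        calc μ (hatT^[n] Aᶜ) ≤ μ ((hatT^[n] Aᶜ ∩ An) ∪ Anᶜ) := by
              refine measure_mono fun x hx => ?_
              by_cases hxA : x ∈ An
              · exact Or.inl ⟨hx, hxA⟩
              · exact Or.inr hxA
          _ ≤ μ (hatT^[n] Aᶜ ∩ An) + μ Anᶜ := measure_union_le _ _
          _ = μ Anᶜ := by rw [hac hd2, zero_add]
      calc μ (hatT^[n] A) + μ (hatT^[n] Aᶜ) ≤ μ An + μ Anᶜ := add_le_add hb1 hb2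
        _ = 1 := by rw [measure_add_measure_compl hAnm, measure_univ]
    have hbad : (1 : ENNReal) + 1 ≤ 1 :=
      le_of_tendsto (hc1.add hc2) (Eventually.of_forall hsum)
    norm_num at hbad
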